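/- For all m, p > 0, the harmonic vase HV(m,p) is a compact subset of ℝ³. -/

import Mathlib

open Real Set

noncomputable section

/-- The pedestal of a harmonic vase: the disc of radius 3 in the plane `z = 0`. -/
def HVpedestal : Set (ℝ × ℝ × ℝ) :=
  {q | q.1 ^ 2 + q.2.1 ^ 2 ≤ 9 ∧ q.2.2 = 0}

/-- The wall of the harmonic vase `HV(m,p)`. -/
def HVwall (m p : ℝ) : Set (ℝ × ℝ × ℝ) :=
  {q | ∃ z ∈ Set.Ioc (0 : ℝ) m, ∃ φ ∈ Set.Icc (-π) π,
    q = ((|φ| / π * Real.sin (π * p / z) + 2) * Real.cos φ,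
         (|φ| / π * Real.sin (π * p / z) + 2) * Real.sin φ, z)}

/-- The harmonic vase `HV(m,p)` as a subset of `ℝ³`. -/
def HV (m p : ℝ) : Set (ℝ × ℝ × ℝ) := HVpedestal ∪ HVwall m p

/-- every harmonic vase is compact. -/
theorem HV_isCompact (m p : ℝ) (hm : 0 < m) (hp : 0 < p) : IsCompact (HV m p) := by
  -- continuity of z ↦ z * sin(πp/z) (value 0 at z = 0 by junk division)
  have hcont : Continuous (fun z : ℝ => z * Real.sin (π * p / z)) := by
    rw [continuous_iff_continuousAt]
    intro z
    rcases eq_or_ne z 0 with rfl | hz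
    · have h0 : (0:ℝ) * Real.sin (π * p / 0) = 0 := by simp
      unfold ContinuousAt
      simp only [h0]
      apply squeeze_zero_norm (a := fun t : ℝ => |t|)
      · intro t
        rw [Real.norm_eq_abs, abs_mul]
        calc |t| * |Real.sin (π * p / t)| ≤ |t| * 1 := by
              gcongr
              exact Real.abs_sin_le_one _
          _ = |t| := mul_one _
      · simpa using continuous_abs.tendsto (0:ℝ)
    · exact continuousAt_id.mul (Real.continuous_sin.continuousAt.comp
        (ContinuousAt.div continuousAt_const continuousAt_id hz))
  set F : ℝ × ℝ × ℝ → ℝ × ℝ × ℝ := fun q =>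
    ((|q.2.1| / π * q.2.2 + 2) * Real.cos q.2.1,
     (|q.2.1| / π * q.2.2 + 2) * Real.sin q.2.1, q.1) with hF
  have hFc : Continuous F := by fun_prop
  set S : Set (ℝ × ℝ × ℝ) :=
    Icc ((0:ℝ), (-π:ℝ), (-1:ℝ)) (m, π, 1) ∩
      {q : ℝ × ℝ × ℝ | q.1 * q.2.2 = q.1 * Real.sin (π * p / q.1)} with hSdef
  have hS : IsCompact S :=
    isCompact_Icc.inter_right (isClosed_eq (by fun_prop) (hcont.comp continuous_fst))
  have hped : IsCompact HVpedestal := by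
    apply IsCompact.of_isClosed_subset
      (isCompact_Icc (a := ((-3:ℝ), (-3:ℝ), (-3:ℝ))) (b := (3, 3, 3)))
    · have : HVpedestal = {q : ℝ × ℝ × ℝ | q.1 ^ 2 + q.2.1 ^ 2 ≤ 9} ∩
          {q : ℝ × ℝ × ℝ | q.2.2 = 0} := by
        ext q; simp [HVpedestal, Set.mem_inter_iff]
      rw [this]
      exact (isClosed_le (by fun_prop) continuous_const).inter
        (isClosed_eq (by fun_prop) continuous_const)
    · rintro ⟨x, y, z⟩ ⟨h1, h2⟩
      simp only [Set.mem_Icc, Prod.mk_le_mk] at *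
      refine ⟨⟨by nlinarith, by nlinarith, by norm_num [h2]⟩,
              by nlinarith, by nlinarith, by norm_num [h2]⟩
  have key : HV m p = HVpedestal ∪ F '' S := by
    apply Set.Subset.antisymm
    · rintro q (hq | ⟨z, ⟨hz0, hzm⟩, φ, hφ, rfl⟩)
      · exact Or.inl hq
      · right
        refine ⟨(z, φ, Real.sin (π * p / z)), ⟨?_, rfl⟩, rfl⟩
        simp only [Set.mem_Icc, Prod.mk_le_mk]
        exact ⟨⟨hz0.le, hφ.1, Real.neg_one_le_sin _⟩, hzm, hφ.2, Real.sin_le_one _⟩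
    · rintro q (hq | ⟨⟨z, φ, s⟩, ⟨hbox, heq⟩, rfl⟩)
      · exact Or.inl hq
      · simp only [Set.mem_Icc, Prod.mk_le_mk] at hbox
        obtain ⟨⟨hz0, hφ1, hs1⟩, hzm, hφ2, hs2⟩ := hbox
        simp only [Set.mem_setOf_eq] at heq
        rcases eq_or_lt_of_le hz0 with rfl | hz
        · left
          constructor
          · have hr1 : |φ| / π * s + 2 ≤ 3 := by
              have h1 : |φ| / π ≤ 1 := by
                rw [div_le_one Real.pi_pos]
                exact abs_le.mpr ⟨hφ1, hφ2⟩
              have h2 : 0 ≤ |φ| / π := div_nonneg (abs_nonneg _) Real.pi_pos.le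
              nlinarith
            have hr2 : 1 ≤ |φ| / π * s + 2 := by
              have h1 : |φ| / π ≤ 1 := by
                rw [div_le_one Real.pi_pos]
                exact abs_le.mpr ⟨hφ1, hφ2⟩
              have h2 : 0 ≤ |φ| / π := div_nonneg (abs_nonneg _) Real.pi_pos.le
              nlinarith
            simp only [hF]
            have hrsq : ((|φ| / π * s + 2) * Real.cos φ) ^ 2 +
                ((|φ| / π * s + 2) * Real.sin φ) ^ 2 = (|φ| / π * s + 2) ^ 2 := by
              have h := Real.sin_sq_add_cos_sq φ
              nlinarith [h]
            rw [hrsq]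
            nlinarith [hr1, hr2]
          · rfl
        · right
          have hs : s = Real.sin (π * p / z) := by
            field_simp at heq
            exact heq
          exact ⟨z, ⟨hz, hzm⟩, φ, ⟨hφ1, hφ2⟩, by rw [hs]⟩
  rw [key]
  exact hped.union (hS.image hFc)
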